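/- The function φ from monomials of R to the group ring ℤ/2[C₂] (where C₂ = ⟨t : t² = 1⟩) given by φ(sⁿtᵐ) = t^{(n + nm + m) mod 2}, extended ℤ-linearly to R, annihilates every generator of I: namely φ(sⁿtⁿ − sⁿ) = 0, φ(sⁿtᵐ + s⁻ⁿtᵐ⁻ⁿ) = 0, φ(sⁿtᵐ + sᵐtⁿ) = 0, and φ(sⁿtᵐ(1−t)²) = 0 for all integers n, m. -/

import Mathlib

noncomputable section

abbrev R2 : Type := AddMonoidAlgebra ℤ (ℤ × ℤ)

def mono (n m : ℤ) : R2 := AddMonoidAlgebra.single (n, m) 1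

def Igen : Set R2 :=
  {x | ∃ n : ℤ, x = mono n n - mono n 0} ∪
  {x | ∃ n m : ℤ, x = mono n m + mono (-n) (m - n)} ∪
  {x | ∃ n m : ℤ, x = mono n m + mono m n} ∪
  {x | ∃ n m : ℤ, x = mono n m * (1 - mono 0 1) ^ 2}

def I : AddSubgroup R2 := AddSubgroup.closure Igen

abbrev A2 : Type := AddMonoidAlgebra (ZMod 2) (ZMod 2)

def tA (k : ZMod 2) : A2 := AddMonoidAlgebra.single k 1

def Jf (n m : ℤ) : ZMod 2 := ((n + n * m + m : ℤ) : ZMod 2)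

def phi : R2 →ₗ[ℤ] A2 :=
  Finsupp.lsum ℤ (fun p : ℤ × ℤ => LinearMap.toSpanSingleton ℤ A2 (tA (Jf p.1 p.2))) ∘ₗ (AddMonoidAlgebra.coeffLinearEquiv ℤ).toLinearMap

def epsA : A2 →ₐ[ZMod 2] ZMod 2 := (AddMonoidAlgebra.lift (ZMod 2) (ZMod 2) (ZMod 2)) 1

def ev1 : LaurentPolynomial ℤ →ₗ[ℤ] ℤ := Finsupp.lsum ℤ (fun _ => LinearMap.id) ∘ₗ (AddMonoidAlgebra.coeffLinearEquiv ℤ).toLinearMap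

def lder : LaurentPolynomial ℤ →ₗ[ℤ] LaurentPolynomial ℤ :=
  Finsupp.lsum ℤ (fun n : ℤ =>
    LinearMap.toSpanSingleton ℤ (LaurentPolynomial ℤ) ((n : ℤ) • LaurentPolynomial.T (n - 1))) ∘ₗ (AddMonoidAlgebra.coeffLinearEquiv ℤ).toLinearMap

def ev2 : R2 →ₗ[ℤ] ZMod 2 :=
  Finsupp.lsum ℤ (fun _ : ℤ × ℤ => LinearMap.toSpanSingleton ℤ (ZMod 2) 1) ∘ₗ (AddMonoidAlgebra.coeffLinearEquiv ℤ).toLinearMap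

lemma phi_mono (n m : ℤ) : phi (mono n m) = tA (Jf n m) := by
  rw [phi, mono, AddMonoidAlgebra.single]
  rw [LinearMap.comp_apply]
  erw [Finsupp.lsum_single (S := ℤ)]
  rw [LinearMap.toSpanSingleton_apply, one_smul]

lemma tA_add_self (k : ZMod 2) : tA k + tA k = 0 := by
  have h2 : (1 : ZMod 2) + 1 = 0 := by decide
  rw [tA, ← AddMonoidAlgebra.single_add, h2]
  exact AddMonoidAlgebra.single_zero k

lemma mono_mul (a b c d : ℤ) : mono a b * mono c d = mono (a + c) (b + d) := by
  simp [mono, AddMonoidAlgebra.single_mul_single]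

lemma jf_eq (n m n' m' : ℤ)
    (h : (n : ZMod 2) + n * m + m = (n' : ZMod 2) + n' * m' + m') :
    Jf n m = Jf n' m' := by
  simp only [Jf]; push_cast; exact h

theorem stmt6 : ∀ n m : ℤ,
    phi (mono n n - mono n 0) = 0 ∧
    phi (mono n m + mono (-n) (m - n)) = 0 ∧
    phi (mono n m + mono m n) = 0 ∧
    phi (mono n m * (1 - mono 0 1) ^ 2) = 0 := by
  intro n m
  have key : ∀ x y : ZMod 2, (x + x * x + x = x + x * 0 + 0) ∧
      (-x + -x * (y - x) + (y - x) = x + x * y + y) ∧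
      (y + y * x + x = x + x * y + y) ∧
      (x + x * (y + 2) + (y + 2) = x + x * y + y) := by decide
  refine ⟨?_, ?_, ?_, ?_⟩
  · have h := jf_eq n n n 0 (by push_cast; exact (key n m).1)
    rw [map_sub, phi_mono, phi_mono, h, sub_self]
  · have h := jf_eq (-n) (m - n) n m (by push_cast; exact (key n m).2.1)
    rw [map_add, phi_mono, phi_mono, h, tA_add_self]
  · have h := jf_eq m n n m (by push_cast; exact (key n m).2.2.1)
    rw [map_add, phi_mono, phi_mono, h, tA_add_self]
  · have hexp : mono n m * (1 - mono 0 1) ^ 2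
        = mono n m - mono n (m + 1) - mono n (m + 1) + mono n (m + 2) := by
      have h1 : mono n m * (1 - mono 0 1) ^ 2
          = mono n m - mono n m * mono 0 1 - mono n m * mono 0 1
            + mono n m * mono 0 1 * mono 0 1 := by ring
      rw [h1, mono_mul, mono_mul]
      norm_num
      congr 1
      ring
    have h := jf_eq n (m + 2) n m (by push_cast; exact (key n m).2.2.2)
    rw [hexp, map_add, map_sub, map_sub, phi_mono, phi_mono, phi_mono, h]
    linear_combination tA_add_self (Jf n m) - tA_add_self (Jf n (m + 1))
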